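/- Let Δ ⊆ ℝ⁴ be the nonnegative orthant cone and let V, W ∈ Gr(2,4) be the row spans of the matrices V = [[1,0,1,1],[0,1,2,1]] and W = [[1,0,1,−1],[0,1,−2,1]]. Then: (a) V contains a nonzero vector with all coordinates ≥ 0 (V stabs Δ) while W contains no such vector; (b) the Plücker coordinates p_{12}, p_{14}, p_{23}, p_{34} (2×2 minors on the indicated column pairs) of V and W have the same signs (+,+,−,−); (c) the Plücker coordinates p_{13}, p_{24} of V and W have different signs. -/

import Mathlib

noncomputable def rowSpan {k n : ℕ} (A : Matrix (Fin k) (Fin n) ℝ) : Submodule ℝ (Fin n → ℝ) :=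
  Submodule.span ℝ (Set.range fun i => A i)

/-- The `2 × 2` minor of a `2 × 4` matrix on columns `i` and `j`. -/
noncomputable def pl (M : Matrix (Fin 2) (Fin 4) ℝ) (i j : Fin 4) : ℝ :=
  M 0 i * M 1 j - M 0 j * M 1 i

noncomputable def Vmat : Matrix (Fin 2) (Fin 4) ℝ := !![1, 0, 1, 1; 0, 1, 2, 1]
noncomputable def Wmat : Matrix (Fin 2) (Fin 4) ℝ := !![1, 0, 1, -1; 0, 1, -2, 1]

/-- For `V` and `W` the row spans of `[[1,0,1,1],[0,1,2,1]]` and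
`[[1,0,1,−1],[0,1,−2,1]]`: (a) `V` contains a nonzero vector with all coordinates `≥ 0`
(it stabs the orthant `Δ`) while `W` contains none; (b) the Plücker coordinates
`p₁₂, p₁₄, p₂₃, p₃₄` of `V` and `W` have the same signs `(+,+,−,−)`;
(c) the Plücker coordinates `p₁₃` and `p₂₄` of `V` and `W` have different signs. -/
theorem stmt17 :
    ((∃ x, x ∈ rowSpan Vmat ∧ x ≠ 0 ∧ ∀ i, 0 ≤ x i) ∧
      ¬ (∃ x, x ∈ rowSpan Wmat ∧ x ≠ 0 ∧ ∀ i, 0 ≤ x i)) ∧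
    ((0 < pl Vmat 0 1 ∧ 0 < pl Vmat 0 3 ∧ pl Vmat 1 2 < 0 ∧ pl Vmat 2 3 < 0) ∧
      (0 < pl Wmat 0 1 ∧ 0 < pl Wmat 0 3 ∧ pl Wmat 1 2 < 0 ∧ pl Wmat 2 3 < 0)) ∧
    (pl Vmat 0 2 * pl Wmat 0 2 < 0 ∧ pl Vmat 1 3 * pl Wmat 1 3 < 0) := by
  refine ⟨⟨⟨Vmat 0, ?_, ?_, ?_⟩, ?_⟩, ?_, ?_⟩
  · exact Submodule.subset_span ⟨0, rfl⟩
  · intro h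
    have := congrFun h 0
    simp [Vmat] at this
  · intro i
    fin_cases i <;> norm_num [Vmat]
  · rintro ⟨x, hx, hne, hpos⟩
    rw [rowSpan, Submodule.mem_span_range_iff_exists_fun] at hx
    obtain ⟨c, hc⟩ := hx
    have hx0 := congrFun hc 0
    have hx1 := congrFun hc 1
    have hx2 := congrFun hc 2
    have hx3 := congrFun hc 3
    simp [Fin.sum_univ_two, Wmat] at hx0 hx1 hx2 hx3
    have h0 := hpos 0
    have h1 := hpos 1
    have h2 := hpos 2
    have h3 := hpos 3
    rw [← hx0] at h0
    rw [← hx1] at h1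
    rw [← hx2] at h2
    rw [← hx3] at h3
    have hc0 : c 0 = 0 := by linarith
    have hc1 : c 1 = 0 := by linarith
    apply hne
    funext i
    fin_cases i <;>
      simp [← hc, Fin.sum_univ_two, hc0, hc1]
  · norm_num [pl, Vmat, Wmat, Matrix.cons_val_three, Matrix.cons_val_two, Matrix.vecHead, Matrix.vecTail]
  · norm_num [pl, Vmat, Wmat, Matrix.cons_val_three, Matrix.cons_val_two, Matrix.vecHead, Matrix.vecTail]
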